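/- Every syzygy in Syz(F) that is homogeneous of degree r+2 (i.e., has coefficients that are homogeneous linear forms) and is multihomogeneous with respect to the Z^{m+r} ⊕ Z^n multigrading, whose multidegree has e-component supported on {h, i*} ∪ {m+1,…,m+r} with h, i* ∈ {1,…,m}, and which lies in the span of S3 ∪ S4 while involving none of the variables c_{ij} in its coefficients, must be a scalar multiple of the S3-element |D_{I,J}|_{1,•} − |D_{I,J}|_{2,•} (the difference of the Laplace expansions of |D_{I,J}| along its two rows with index in {1,…,m}) for the corresponding pair (I, J). -/

import Mathlib

open MvPolynomial

namespace SM

/-- Variables of the ring `R`: `y`-variables indexed by `Fin m × Fin n` (inl)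
and `c`-variables indexed by `Fin r × Fin n` (inr). -/
abbrev Vars (m r n : ℕ) := (Fin m × Fin n) ⊕ (Fin r × Fin n)

/-- Variables of the ring `P`: `x`-variables indexed by `Fin K` (inl)
and `c`-variables indexed by `Fin r × Fin n` (inr). -/
abbrev XVars (K r n : ℕ) := Fin K ⊕ (Fin r × Fin n)

/-- The free module with basis indexed by pairs of finsets of rows and columns. -/
abbrev FreeMod (S : Type*) (a b : ℕ) := Finset (Fin a) × Finset (Fin b) → S

/-- The `(m+r) × n` matrix `D` obtained by stacking `Y = (y_{kj})` on top of `C = (c_{ij})`. -/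
noncomputable def Dmat (𝕂 : Type*) [Field 𝕂] (m r n : ℕ) :
    Matrix (Fin (m + r)) (Fin n) (MvPolynomial (Vars m r n) 𝕂) :=
  Matrix.of fun i j =>
    if h : (i : ℕ) < m then X (Sum.inl (⟨i, h⟩, j))
    else X (Sum.inr (⟨(i : ℕ) - m, by have := i.isLt; omega⟩, j))

/-- The minor of `A` on the rows `I` and columns `J`, when both have cardinality `k`
(and `0` otherwise). -/
noncomputable def minorOf {S : Type*} [CommRing S] {a b : ℕ} (k : ℕ)
    (A : Matrix (Fin a) (Fin b) S) (I : Finset (Fin a)) (J : Finset (Fin b)) : S :=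
  if h : I.card = k ∧ J.card = k then
    (Matrix.of fun s t : Fin k =>
      A ((I.orderIsoOfFin h.1 s : Fin a)) ((J.orderIsoOfFin h.2 t : Fin b))).det
  else 0

/-- The map `φ` sending `E_{I,J} ↦ |A_{I,J}|`. -/
noncomputable def phiMap {S : Type*} [CommRing S] {a b : ℕ} (k : ℕ)
    (A : Matrix (Fin a) (Fin b) S) (T : FreeMod S a b) : S :=
  ∑ p : Finset (Fin a) × Finset (Fin b), T p * minorOf k A p.1 p.2


/-- The standard basis vector `E_{I,J}` of the free module. -/
noncomputable def eVec {S : Type*} [CommRing S] {a b : ℕ}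
    (p : Finset (Fin a) × Finset (Fin b)) : FreeMod S a b := Pi.single p 1

/-- The set `{m+1, …, m+r}` of the last `r` row indices. -/
def lastRows (m r : ℕ) : Finset (Fin (m + r)) := Finset.univ.filter fun i => m ≤ (i : ℕ)

/-- The set `{1, …, m}` of the first `m` row indices. -/
def firstRows (m r : ℕ) : Finset (Fin (m + r)) := Finset.univ.filter fun i => (i : ℕ) < m

/-- The Laplace expansion, along the repeated row, of the determinant of the
`(r+2) × (r+2)` matrix obtained from `A_{I,J}` (with `|J| = r+2`) by adding an extra copy of
row `i`, viewed as an element of the free module: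
`∑_t (-1)^t d_{i, j_t} E_{I, J \ {j_t}}`. -/
noncomputable def s1El {S : Type*} [CommRing S] {a b : ℕ} (r : ℕ)
    (A : Matrix (Fin a) (Fin b) S) (i : Fin a) (I : Finset (Fin a)) (J : Finset (Fin b))
    (hJ : J.card = r + 2) : FreeMod S a b :=
  ∑ t : Fin (r + 2),
    ((-1 : S) ^ (t : ℕ) * A i (J.orderIsoOfFin hJ t)) •
      eVec (I, J.erase (J.orderIsoOfFin hJ t))

/-- The column analogue of `s1El`: the Laplace expansion, along the repeated column, of the
determinant of the matrix obtained from `A_{I,J}` (with `|I| = r+2`) by adding an extra copy of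
column `j`. -/
noncomputable def s2El {S : Type*} [CommRing S] {a b : ℕ} (r : ℕ)
    (A : Matrix (Fin a) (Fin b) S) (j : Fin b) (I : Finset (Fin a)) (J : Finset (Fin b))
    (hI : I.card = r + 2) : FreeMod S a b :=
  ∑ s : Fin (r + 2),
    ((-1 : S) ^ (s : ℕ) * A ((I.orderIsoOfFin hI s : Fin a)) j) •
      eVec (I.erase (I.orderIsoOfFin hI s), J)

/-- The Laplace expansion of `|A_{I,J}|` (with `|I| = |J| = r+2`) along its `p`-th row
(`0`-indexed), with the usual cofactor signs, viewed as an element of the free module. -/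
noncomputable def rowExp {S : Type*} [CommRing S] {a b : ℕ} (r : ℕ)
    (A : Matrix (Fin a) (Fin b) S) (I : Finset (Fin a)) (J : Finset (Fin b))
    (hI : I.card = r + 2) (hJ : J.card = r + 2) (p : Fin (r + 2)) : FreeMod S a b :=
  ∑ t : Fin (r + 2),
    ((-1 : S) ^ ((p : ℕ) + (t : ℕ)) *
        A ((I.orderIsoOfFin hI p : Fin a)) ((J.orderIsoOfFin hJ t : Fin b))) •
      eVec (I.erase (I.orderIsoOfFin hI p), J.erase (J.orderIsoOfFin hJ t))

/-- The Laplace expansion of `|A_{I,J}|` (with `|I| = |J| = r+2`) along its `q`-th column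
(`0`-indexed), with the usual cofactor signs, viewed as an element of the free module. -/
noncomputable def colExp {S : Type*} [CommRing S] {a b : ℕ} (r : ℕ)
    (A : Matrix (Fin a) (Fin b) S) (I : Finset (Fin a)) (J : Finset (Fin b))
    (hI : I.card = r + 2) (hJ : J.card = r + 2) (q : Fin (r + 2)) : FreeMod S a b :=
  ∑ s : Fin (r + 2),
    ((-1 : S) ^ ((s : ℕ) + (q : ℕ)) *
        A ((I.orderIsoOfFin hI s : Fin a)) ((J.orderIsoOfFin hJ q : Fin b))) •
      eVec (I.erase (I.orderIsoOfFin hI s), J.erase (J.orderIsoOfFin hJ q))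

/-- Kurano's Type I row syzygies `S1`. -/
def S1Set {S : Type*} [CommRing S] {a b : ℕ} (r : ℕ) (A : Matrix (Fin a) (Fin b) S) :
    Set (FreeMod S a b) :=
  {T | ∃ (I : Finset (Fin a)) (J : Finset (Fin b)) (_ : I.card = r + 1) (hJ : J.card = r + 2)
    (i : Fin a), i ∈ I ∧ T = s1El r A i I J hJ}

/-- Kurano's Type I column syzygies `S2`. -/
def S2Set {S : Type*} [CommRing S] {a b : ℕ} (r : ℕ) (A : Matrix (Fin a) (Fin b) S) :
    Set (FreeMod S a b) :=
  {T | ∃ (I : Finset (Fin a)) (J : Finset (Fin b)) (hI : I.card = r + 2) (_ : J.card = r + 1)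
    (j : Fin b), j ∈ J ∧ T = s2El r A j I J hI}

/-- The syzygies `S3`: differences of the Laplace expansions of `|A_{I,J}|` along its first row
and along its `h`-th row, `h ≥ 2` (here `0`-indexed, so `h ≥ 1`). -/
def S3Set {S : Type*} [CommRing S] {a b : ℕ} (r : ℕ) (A : Matrix (Fin a) (Fin b) S) :
    Set (FreeMod S a b) :=
  {T | ∃ (I : Finset (Fin a)) (J : Finset (Fin b)) (hI : I.card = r + 2) (hJ : J.card = r + 2)
    (h : Fin (r + 2)), 1 ≤ (h : ℕ) ∧ T = rowExp r A I J hI hJ 0 - rowExp r A I J hI hJ h}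

/-- The syzygies `S4`: differences of the Laplace expansions of `|A_{I,J}|` along its first row
and along its `k`-th column, `k ≥ 2` (here `0`-indexed, so `k ≥ 1`). -/
def S4Set {S : Type*} [CommRing S] {a b : ℕ} (r : ℕ) (A : Matrix (Fin a) (Fin b) S) :
    Set (FreeMod S a b) :=
  {T | ∃ (I : Finset (Fin a)) (J : Finset (Fin b)) (hI : I.card = r + 2) (hJ : J.card = r + 2)
    (k : Fin (r + 2)), 1 ≤ (k : ℕ) ∧ T = rowExp r A I J hI hJ 0 - colExp r A I J hI hJ k}

/-- The set `S'_1`: for `h ∈ {1,…,m}`, `I = {h} ∪ {m+1,…,m+r}` and `|J| = r+2`, the Laplace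
expansion along the repeated row `h`. -/
def S1'Set (𝕂 : Type*) [Field 𝕂] (m r n : ℕ) :
    Set (FreeMod (MvPolynomial (Vars m r n) 𝕂) (m + r) n) :=
  {T | ∃ (i : Fin (m + r)) (J : Finset (Fin n)) (hJ : J.card = r + 2),
    (i : ℕ) < m ∧ T = s1El r (Dmat 𝕂 m r n) i (insert i (lastRows m r)) J hJ}

/-- The set `S'_3`: for `|I| = |J| = r+2` with `|I ∩ {1,…,m}| = 2`, the difference of the Laplace
expansions of `|D_{I,J}|` along its two rows with index in `{1,…,m}` (which are the two smallest
rows of `I`, i.e. positions `0` and `1`). -/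
def S3'Set (𝕂 : Type*) [Field 𝕂] (m r n : ℕ) :
    Set (FreeMod (MvPolynomial (Vars m r n) 𝕂) (m + r) n) :=
  {T | ∃ (I : Finset (Fin (m + r))) (J : Finset (Fin n)) (hI : I.card = r + 2)
    (hJ : J.card = r + 2), (I ∩ firstRows m r).card = 2 ∧
    T = rowExp r (Dmat 𝕂 m r n) I J hI hJ 0 - rowExp r (Dmat 𝕂 m r n) I J hI hJ 1}

/-- The `(m+r) × n` matrix obtained by stacking `M_x = ∑ x_ℓ M_ℓ` on top of `C`. -/
noncomputable def MxC (𝕂 : Type*) [Field 𝕂] (m r n K : ℕ)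
    (M : Fin K → Matrix (Fin m) (Fin n) 𝕂) :
    Matrix (Fin (m + r)) (Fin n) (MvPolynomial (XVars K r n) 𝕂) :=
  Matrix.of fun i j =>
    if h : (i : ℕ) < m then ∑ ℓ, C (M ℓ ⟨i, h⟩ j) * X (Sum.inl ℓ)
    else X (Sum.inr (⟨(i : ℕ) - m, by have := i.isLt; omega⟩, j))

/-- The specialization homomorphism `ρ : R → P`, `y_{kj} ↦ m_{kj}(x)`, `c_{ij} ↦ c_{ij}`. -/
noncomputable def rho (𝕂 : Type*) [Field 𝕂] (m r n K : ℕ)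
    (M : Fin K → Matrix (Fin m) (Fin n) 𝕂) :
    MvPolynomial (Vars m r n) 𝕂 →ₐ[𝕂] MvPolynomial (XVars K r n) 𝕂 :=
  aeval fun v => match v with
    | Sum.inl (k, j) => ∑ ℓ, C (M ℓ k j) * X (Sum.inl ℓ)
    | Sum.inr (i, j) => X (Sum.inr (i, j))


section Helpers

lemma erase_pair_eq {a b k : ℕ} {I : Finset (Fin a)} {J : Finset (Fin b)}
    (hI : I.card = k) (hJ : J.card = k) (p p' t t' : Fin k) :
    ((I.erase (I.orderIsoOfFin hI p), J.erase (J.orderIsoOfFin hJ t)) =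
      (I.erase (I.orderIsoOfFin hI p'), J.erase (J.orderIsoOfFin hJ t'))) ↔
      (p = p' ∧ t = t') := by
  rw [Prod.mk.injEq, Finset.erase_inj I (I.orderIsoOfFin hI p).2,
    Finset.erase_inj J (J.orderIsoOfFin hJ t).2]
  constructor
  · rintro ⟨h1, h2⟩
    exact ⟨(I.orderIsoOfFin hI).injective (Subtype.ext h1),
      (J.orderIsoOfFin hJ).injective (Subtype.ext h2)⟩
  · rintro ⟨rfl, rfl⟩; exact ⟨rfl, rfl⟩

lemma rowExp_apply {S : Type*} [CommRing S] {a b : ℕ} (r : ℕ)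
    (A : Matrix (Fin a) (Fin b) S) (I : Finset (Fin a)) (J : Finset (Fin b))
    (hI : I.card = r + 2) (hJ : J.card = r + 2) (p' p t : Fin (r + 2)) :
    rowExp r A I J hI hJ p'
      ((I.erase (I.orderIsoOfFin hI p), J.erase (J.orderIsoOfFin hJ t)) :
        Finset (Fin a) × Finset (Fin b)) =
      if p' = p then
        (-1 : S) ^ ((p : ℕ) + (t : ℕ)) *
          A (I.orderIsoOfFin hI p) (J.orderIsoOfFin hJ t)
      else 0 := by
  classical
  unfold rowExp eVec
  rw [Finset.sum_apply]
  simp only [Pi.smul_apply, Pi.single_apply, smul_eq_mul]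
  by_cases hp : p' = p
  · subst hp
    rw [Finset.sum_eq_single t, if_pos rfl, if_pos rfl, mul_one]
    · intro t' _ ht'
      simp only [erase_pair_eq hI hJ]
      rw [if_neg (fun h => ht' h.2.symm), mul_zero]
    · intro h; exact absurd (Finset.mem_univ t) h
  · rw [if_neg hp]
    apply Finset.sum_eq_zero
    intro t' _
    simp only [erase_pair_eq hI hJ]
    rw [if_neg (fun h => hp h.1.symm), mul_zero]

lemma colExp_apply {S : Type*} [CommRing S] {a b : ℕ} (r : ℕ)
    (A : Matrix (Fin a) (Fin b) S) (I : Finset (Fin a)) (J : Finset (Fin b))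
    (hI : I.card = r + 2) (hJ : J.card = r + 2) (k p t : Fin (r + 2)) :
    colExp r A I J hI hJ k
      ((I.erase (I.orderIsoOfFin hI p), J.erase (J.orderIsoOfFin hJ t)) :
        Finset (Fin a) × Finset (Fin b)) =
      if k = t then
        (-1 : S) ^ ((p : ℕ) + (t : ℕ)) *
          A (I.orderIsoOfFin hI p) (J.orderIsoOfFin hJ t)
      else 0 := by
  classical
  unfold colExp eVec
  rw [Finset.sum_apply]
  simp only [Pi.smul_apply, Pi.single_apply, smul_eq_mul]
  by_cases hk : k = t
  · subst hk
    rw [Finset.sum_eq_single p, if_pos rfl, if_pos rfl, mul_one]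
    · intro s' _ hs'
      simp only [erase_pair_eq hI hJ]
      rw [if_neg (fun h => hs' h.1.symm), mul_zero]
    · intro h; exact absurd (Finset.mem_univ p) h
  · rw [if_neg hk]
    apply Finset.sum_eq_zero
    intro s' _
    simp only [erase_pair_eq hI hJ]
    rw [if_neg (fun h => hk h.2.symm), mul_zero]

lemma lastRows_card (m r : ℕ) : (lastRows m r).card = r := by
  have himg : lastRows m r =
      Finset.image (fun i : Fin r => (⟨m + (i : ℕ), by omega⟩ : Fin (m + r)))
        Finset.univ := by
    ext x
    have hx := x.isLt
    simp only [lastRows, Finset.mem_filter, Finset.mem_univ, true_and, Finset.mem_image]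
    constructor
    · intro hx'
      exact ⟨⟨(x : ℕ) - m, by omega⟩, Fin.ext (by simp; omega)⟩
    · rintro ⟨i, rfl⟩
      simp
  rw [himg, Finset.card_image_of_injective _
    (fun i j hij => by simpa [Fin.ext_iff] using hij), Finset.card_univ, Fintype.card_fin]

end Helpers

end SM

open SM in
/-- Fix subsets `I` (with `|I| = r+2` and `{m+1,…,m+r} ⊆ I`, so that
`I ∩ {1,…,m}` consists of two elements, which occupy the first two positions of `I`) and `J`
(with `|J| = r+2`). Every syzygy in `Syz(F)` that is homogeneous of degree `r+2` (its
coefficients are homogeneous linear forms), lies in the `𝕂`-span of the sets `S3 ∪ S4`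
associated to the pair `(I, J)` (hence is multihomogeneous of the corresponding multidegree,
whose `e`-component is supported on `{h, i*} ∪ {m+1,…,m+r}` with `h, i* ∈ {1,…,m}`), and whose
coefficients involve none of the `c`-variables, must be a scalar multiple of the `S3`-element
`|D_{I,J}|_{1,•} − |D_{I,J}|_{2,•}`, the difference of the Laplace expansions of `|D_{I,J}|`
along its two rows with index in `{1,…,m}`. -/
theorem stmt_15 (𝕂 : Type*) [Field 𝕂] (m r n : ℕ) (hm : 0 < m) (hr : 0 < r) (hrn : r ≤ n)
    (I : Finset (Fin (m + r))) (J : Finset (Fin n))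
    (hI : I.card = r + 2) (hJ : J.card = r + 2) (hIlast : lastRows m r ⊆ I)
    (T : FreeMod (MvPolynomial (Vars m r n) 𝕂) (m + r) n)
    (hker : phiMap (r + 1) (Dmat 𝕂 m r n) T = 0)
    (hlin : ∀ p, (T p).IsHomogeneous 1)
    (hspan : T ∈ Submodule.span 𝕂
      ({U | ∃ h : Fin (r + 2), 1 ≤ (h : ℕ) ∧
          U = rowExp r (Dmat 𝕂 m r n) I J hI hJ 0 - rowExp r (Dmat 𝕂 m r n) I J hI hJ h} ∪
        {U | ∃ k : Fin (r + 2), 1 ≤ (k : ℕ) ∧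
          U = rowExp r (Dmat 𝕂 m r n) I J hI hJ 0 - colExp r (Dmat 𝕂 m r n) I J hI hJ k}))
    (hy : ∀ p, T p ∈ MvPolynomial.supported 𝕂 (Set.range Sum.inl)) :
    ∃ c : 𝕂,
      T = c • (rowExp r (Dmat 𝕂 m r n) I J hI hJ 0 - rowExp r (Dmat 𝕂 m r n) I J hI hJ 1) := by
  classical
  -- abbreviations
  have hmem : T ∈ Submodule.span 𝕂 (Set.range (Sum.elim
      (fun h : Fin (r + 2) =>
        rowExp r (Dmat 𝕂 m r n) I J hI hJ 0 - rowExp r (Dmat 𝕂 m r n) I J hI hJ h)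
      (fun k : Fin (r + 2) =>
        if 1 ≤ (k : ℕ) then
          rowExp r (Dmat 𝕂 m r n) I J hI hJ 0 - colExp r (Dmat 𝕂 m r n) I J hI hJ k
        else 0))) := by
    refine Submodule.span_mono ?_ hspan
    rintro U (⟨h, hh, rfl⟩ | ⟨k, hk, rfl⟩)
    · exact ⟨Sum.inl h, rfl⟩
    · exact ⟨Sum.inr k, by simp [hk]⟩
  obtain ⟨c, hc⟩ := (Submodule.mem_span_range_iff_exists_fun 𝕂).1 hmem
  have hc' : (∑ h : Fin (r + 2), c (Sum.inl h) •
        (rowExp r (Dmat 𝕂 m r n) I J hI hJ 0 - rowExp r (Dmat 𝕂 m r n) I J hI hJ h)) +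
      (∑ k : Fin (r + 2), c (Sum.inr k) •
        (if 1 ≤ (k : ℕ) then
          rowExp r (Dmat 𝕂 m r n) I J hI hJ 0 - colExp r (Dmat 𝕂 m r n) I J hI hJ k
        else 0)) = T := by
    rw [← hc, Fintype.sum_sum_type]
    simp only [Sum.elim_inl, Sum.elim_inr]
  -- number of small rows in `I` is 2
  have hIfirst : (I.filter fun i : Fin (m + r) => ((i : ℕ) < m)).card = 2 := by
    have h1 : I.filter (fun i : Fin (m + r) => ¬ ((i : ℕ) < m)) = lastRows m r := by
      ext x
      simp only [Finset.mem_filter, lastRows, Finset.mem_univ, true_and, not_lt]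
      constructor
      · rintro ⟨_, hx⟩; exact hx
      · intro hx
        exact ⟨hIlast (by simp [lastRows, hx]), hx⟩
    have h2 := Finset.card_filter_add_card_filter_not
      (s := I) (p := fun i : Fin (m + r) => ((i : ℕ) < m))
    rw [h1, lastRows_card, hI] at h2
    omega
  have hmono : StrictMono (fun i : Fin (r + 2) => ((I.orderIsoOfFin hI i : Fin (m + r)))) :=
    fun i j hij => Subtype.coe_lt_coe.2 ((I.orderIsoOfFin hI).strictMono hij)
  -- rows in positions ≥ 2 are big rows
  have hpos : ∀ p : Fin (r + 2), 2 ≤ (p : ℕ) →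
      m ≤ ((I.orderIsoOfFin hI p : Fin (m + r)) : ℕ) := by
    intro p hp
    by_contra hlt
    push_neg at hlt
    have hr2 : 0 < r + 2 := by omega
    have hr2' : 1 < r + 2 := by omega
    have h01 : ((I.orderIsoOfFin hI ⟨0, hr2⟩ : Fin (m + r))) <
        ((I.orderIsoOfFin hI ⟨1, hr2'⟩ : Fin (m + r))) :=
      hmono (by simp [Fin.lt_def])
    have h1p : ((I.orderIsoOfFin hI ⟨1, hr2'⟩ : Fin (m + r))) <
        ((I.orderIsoOfFin hI p : Fin (m + r))) :=
      hmono (by simp [Fin.lt_def]; omega)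
    have hsub3 : ({(I.orderIsoOfFin hI ⟨0, hr2⟩ : Fin (m + r)),
        (I.orderIsoOfFin hI ⟨1, hr2'⟩ : Fin (m + r)),
        (I.orderIsoOfFin hI p : Fin (m + r))} : Finset (Fin (m + r))) ⊆
        I.filter (fun i : Fin (m + r) => (i : ℕ) < m) := by
      intro x hx
      have v01 : ((I.orderIsoOfFin hI ⟨0, hr2⟩ : Fin (m + r)) : ℕ) <
          ((I.orderIsoOfFin hI ⟨1, hr2'⟩ : Fin (m + r)) : ℕ) := h01
      have v1p : ((I.orderIsoOfFin hI ⟨1, hr2'⟩ : Fin (m + r)) : ℕ) <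
          ((I.orderIsoOfFin hI p : Fin (m + r)) : ℕ) := h1p
      simp only [Finset.mem_insert, Finset.mem_singleton] at hx
      rcases hx with rfl | rfl | rfl <;>
        exact Finset.mem_filter.2 ⟨(I.orderIsoOfFin hI _).2, by omega⟩
    have hcard3 : ({(I.orderIsoOfFin hI ⟨0, hr2⟩ : Fin (m + r)),
        (I.orderIsoOfFin hI ⟨1, hr2'⟩ : Fin (m + r)),
        (I.orderIsoOfFin hI p : Fin (m + r))} : Finset (Fin (m + r))).card = 3 := by
      rw [Finset.card_insert_of_notMem (by
          simp only [Finset.mem_insert, Finset.mem_singleton]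
          push_neg
          exact ⟨h01.ne, (h01.trans h1p).ne⟩),
        Finset.card_insert_of_notMem (by
          simp only [Finset.mem_singleton]
          exact h1p.ne), Finset.card_singleton]
    have := Finset.card_le_card hsub3
    rw [hcard3, hIfirst] at this
    omega
  -- the key coordinate equations
  have hkey : ∀ p : Fin (r + 2), 2 ≤ (p : ℕ) → ∀ t : Fin (r + 2),
      c (Sum.inl p) + (if 1 ≤ (t : ℕ) then c (Sum.inr t) else 0) = 0 := by
    intro p hp t
    have hpm : ¬ ((I.orderIsoOfFin hI p : Fin (m + r)) : ℕ) < m := not_lt.2 (hpos p hp)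
    set v : Vars m r n := Sum.inr
      (⟨((I.orderIsoOfFin hI p : Fin (m + r)) : ℕ) - m,
        by have := (I.orderIsoOfFin hI p : Fin (m + r)).isLt; omega⟩,
       (J.orderIsoOfFin hJ t : Fin n)) with hv
    have hAe : Dmat 𝕂 m r n (I.orderIsoOfFin hI p) (J.orderIsoOfFin hJ t) =
        X v := by
      rw [Dmat, Matrix.of_apply, dif_neg hpm]
    have h0p : (0 : Fin (r + 2)) ≠ p := by
      intro h
      rw [← h] at hp
      simp at hp
    set q : Finset (Fin (m + r)) × Finset (Fin n) :=
      (I.erase (I.orderIsoOfFin hI p), J.erase (J.orderIsoOfFin hJ t)) with hq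
    have hTq : T q =
        (-(c (Sum.inl p) + (if 1 ≤ (t : ℕ) then c (Sum.inr t) else 0))) •
          ((-1 : MvPolynomial (Vars m r n) 𝕂) ^ ((p : ℕ) + (t : ℕ)) * X v) := by
      rw [← hc']
      simp only [Pi.add_apply, Finset.sum_apply, Pi.smul_apply, Pi.sub_apply]
      have hL : ∀ h : Fin (r + 2),
          (rowExp r (Dmat 𝕂 m r n) I J hI hJ 0 q - rowExp r (Dmat 𝕂 m r n) I J hI hJ h q) =
          if h = p then
            -((-1 : MvPolynomial (Vars m r n) 𝕂) ^ ((p : ℕ) + (t : ℕ)) * X v)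
          else 0 := by
        intro h
        rw [hq, rowExp_apply r (Dmat 𝕂 m r n) I J hI hJ 0 p t,
          rowExp_apply r (Dmat 𝕂 m r n) I J hI hJ h p t, if_neg h0p, zero_sub, hAe]
        by_cases hh : h = p
        · rw [if_pos hh, if_pos hh]
        · rw [if_neg hh, if_neg hh, neg_zero]
      have hRk : ∀ k : Fin (r + 2),
          ((if 1 ≤ (k : ℕ) then
            rowExp r (Dmat 𝕂 m r n) I J hI hJ 0 - colExp r (Dmat 𝕂 m r n) I J hI hJ k
          else 0) : FreeMod (MvPolynomial (Vars m r n) 𝕂) (m + r) n) q =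
          if k = t then
            (if 1 ≤ (t : ℕ) then
              -((-1 : MvPolynomial (Vars m r n) 𝕂) ^ ((p : ℕ) + (t : ℕ)) * X v)
            else 0)
          else 0 := by
        intro k
        by_cases hk1 : 1 ≤ (k : ℕ)
        · rw [if_pos hk1]
          rw [Pi.sub_apply, hq, rowExp_apply r (Dmat 𝕂 m r n) I J hI hJ 0 p t,
            colExp_apply r (Dmat 𝕂 m r n) I J hI hJ k p t, if_neg h0p, zero_sub, hAe]
          by_cases hk : k = t
          · rw [if_pos hk, if_pos hk, if_pos (hk ▸ hk1)]
          · rw [if_neg hk, if_neg hk, neg_zero]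
        · rw [if_neg hk1]
          by_cases hk : k = t
          · subst hk
            rw [if_pos rfl, if_neg hk1]
            rfl
          · rw [if_neg hk]
            rfl
      calc (∑ h : Fin (r + 2), c (Sum.inl h) •
              (rowExp r (Dmat 𝕂 m r n) I J hI hJ 0 q -
                rowExp r (Dmat 𝕂 m r n) I J hI hJ h q)) +
            (∑ k : Fin (r + 2), c (Sum.inr k) •
              ((if 1 ≤ (k : ℕ) then
                rowExp r (Dmat 𝕂 m r n) I J hI hJ 0 - colExp r (Dmat 𝕂 m r n) I J hI hJ k
              else 0) : FreeMod (MvPolynomial (Vars m r n) 𝕂) (m + r) n) q)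
          = (∑ h : Fin (r + 2), if h = p then
              c (Sum.inl h) • -((-1 : MvPolynomial (Vars m r n) 𝕂) ^ ((p : ℕ) + (t : ℕ)) * X v)
              else 0) +
            (∑ k : Fin (r + 2), if k = t then
              c (Sum.inr k) • (if 1 ≤ (t : ℕ) then
                -((-1 : MvPolynomial (Vars m r n) 𝕂) ^ ((p : ℕ) + (t : ℕ)) * X v)
              else 0) else 0) := by
            congr 1
            · refine Finset.sum_congr rfl fun h _ => ?_
              rw [hL h]
              by_cases hh : h = p
              · rw [if_pos hh, if_pos hh]
              · rw [if_neg hh, if_neg hh, smul_zero]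
            · refine Finset.sum_congr rfl fun k _ => ?_
              rw [hRk k]
              by_cases hk : k = t
              · rw [if_pos hk, if_pos hk]
              · rw [if_neg hk, if_neg hk, smul_zero]
        _ = (-(c (Sum.inl p) + (if 1 ≤ (t : ℕ) then c (Sum.inr t) else 0))) •
              ((-1 : MvPolynomial (Vars m r n) 𝕂) ^ ((p : ℕ) + (t : ℕ)) * X v) := by
            rw [Finset.sum_ite_eq' Finset.univ p, Finset.sum_ite_eq' Finset.univ t]
            simp only [Finset.mem_univ, if_pos]
            by_cases ht1 : 1 ≤ (t : ℕ)
            · rw [if_pos ht1, if_pos ht1]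
              rw [smul_neg, smul_neg, ← neg_add, ← add_smul, neg_smul]
            · rw [if_neg ht1, if_neg ht1, smul_zero, add_zero, add_zero, smul_neg,
                ← neg_smul]
    -- the coefficient of the `c`-variable monomial in `T q` vanishes
    have hcoeff0 : MvPolynomial.coeff (Finsupp.single v 1) (T q) = 0 := by
      by_contra hne
      have hvv : v ∈ (T q).vars := by
        rw [MvPolynomial.mem_vars]
        exact ⟨Finsupp.single v 1, MvPolynomial.mem_support_iff.2 hne, by simp⟩
      have := (MvPolynomial.mem_supported.1 (hy q)) hvv
      rw [hv] at this
      obtain ⟨x, hx⟩ := this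
      exact Sum.inl_ne_inr hx
    rw [hTq] at hcoeff0
    rw [MvPolynomial.coeff_smul] at hcoeff0
    have hpow : ((-1 : MvPolynomial (Vars m r n) 𝕂) ^ ((p : ℕ) + (t : ℕ))) =
        MvPolynomial.C ((-1 : 𝕂) ^ ((p : ℕ) + (t : ℕ))) := by
      rw [map_pow, map_neg, map_one]
    rw [hpow, MvPolynomial.coeff_C_mul, MvPolynomial.coeff_X, if_pos rfl, mul_one, smul_eq_mul] at hcoeff0
    rcases mul_eq_zero.1 hcoeff0 with h | h
    · exact neg_eq_zero.1 h
    · exact absurd h (pow_ne_zero _ (neg_ne_zero.2 one_ne_zero))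
  -- conclude
  have ha : ∀ p : Fin (r + 2), 2 ≤ (p : ℕ) → c (Sum.inl p) = 0 := by
    intro p hp
    have := hkey p hp ⟨0, by omega⟩
    simpa using this
  have hp2 : 2 ≤ ((⟨2, by omega⟩ : Fin (r + 2)) : ℕ) := le_refl 2
  have hb : ∀ t : Fin (r + 2), 1 ≤ (t : ℕ) → c (Sum.inr t) = 0 := by
    intro t ht
    have := hkey ⟨2, by omega⟩ hp2 t
    rw [ha ⟨2, by omega⟩ hp2, if_pos ht, zero_add] at this
    exact this
  refine ⟨c (Sum.inl 1), ?_⟩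
  rw [← hc']
  have hsum2 : (∑ k : Fin (r + 2), c (Sum.inr k) •
      (if 1 ≤ (k : ℕ) then
        rowExp r (Dmat 𝕂 m r n) I J hI hJ 0 - colExp r (Dmat 𝕂 m r n) I J hI hJ k
      else 0)) = 0 := by
    apply Finset.sum_eq_zero
    intro k _
    by_cases hk : 1 ≤ (k : ℕ)
    · rw [hb k hk, zero_smul]
    · rw [if_neg hk, smul_zero]
  have hsum1 : (∑ h : Fin (r + 2), c (Sum.inl h) •
      (rowExp r (Dmat 𝕂 m r n) I J hI hJ 0 - rowExp r (Dmat 𝕂 m r n) I J hI hJ h)) =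
      c (Sum.inl 1) •
        (rowExp r (Dmat 𝕂 m r n) I J hI hJ 0 - rowExp r (Dmat 𝕂 m r n) I J hI hJ 1) := by
    apply Finset.sum_eq_single
    · intro h _ hne
      rcases Nat.lt_or_ge (h : ℕ) 2 with hlt | hge
      · have h0 : (h : ℕ) = 0 := by
          have : (h : ℕ) ≠ 1 := fun hv => hne (Fin.ext (by rw [hv, Fin.val_one]))
          omega
        have : h = 0 := Fin.ext (by rw [h0, Fin.val_zero])
        rw [this, sub_self, smul_zero]
      · rw [ha h hge, zero_smul]
    · intro h
      exact absurd (Finset.mem_univ _) h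
  rw [hsum1, hsum2, add_zero]
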